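/- Let t_m be one of the word functions i_m with m ≥ 2 or h_m with m ≥ 3. Let n ≥ 5 and for each 1 ≤ i < j ≤ n let w_{ij} be a word over X_n with c(w_{ij}) = X_n \ {x_i}, satisfying the t_m-consistency conditions: t_m((w_{ij})^{(pq)}) = t_m((w_{pq})^{(ij)}) for all pairwise distinct i, j, p, q with i < j, p < q, and t_m((w_{ij})^{(jk)}) = t_m((w_{jk})^{(ik)}) = t_m((w_{ik})^{(jk)}) for all i < j < k. Let l ∈ {1,…,n} be such that σ(w_{ij}) = x_l for all 1 ≤ i < j ≤ n with l ∉ {i,j} (such an l exists, namely l = π(n) for the associated permutation π of the scheme). Then the family {s(w_{ij}) : 1 ≤ i < j ≤ n, l ∉ {i,j}} is an (n−1)-scheme over the variables X_n \ {x_l}: (a) c(s(w_{ij})) = X_n \ {x_i, x_l}; (b) t_m(s(w_{ij})^{(pq)}) = t_m(s(w_{pq})^{(ij)}) for all pairwise distinct i, j, p, q with i < j, p < q and l ∉ {i,j,p,q}; (c) t_m(s(w_{ij})^{(jk)}) = t_m(s(w_{jk})^{(ik)}) = t_m(s(w_{ik})^{(jk)}) for all i < j < k with l ∉ {i,j,k}.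 -/

import Mathlib

/-! ### Words and word functions -/

/-- The word `w^{(i j)}`: replace every occurrence of the letter `i` by `j`. -/
def subst {X : Type*} [DecidableEq X] (w : List X) (i j : X) : List X :=
  w.map fun t => if t = i then j else t

/-- The prefix `s(w)`: the longest prefix of `w` containing all but one of the
letters of `c(w)` (the empty word if `w` is empty). -/
def wordS {X : Type*} [DecidableEq X] (w : List X) : List X :=
  w.take (w.toFinset.sup fun x => w.idxOf x)

/-- The letter `σ(w)` (the last letter of `w` to occur from the left), as a word of
length at most one; `s(w) ++ σ(w)` is the shortest prefix of `w` with full content. -/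
def wordSigma {X : Type*} [DecidableEq X] (w : List X) : List X :=
  (w.drop (w.toFinset.sup fun x => w.idxOf x)).take 1

/-- The suffix `e(w)`, dual to `s(w)`. -/
def wordE {X : Type*} [DecidableEq X] (w : List X) : List X :=
  (wordS w.reverse).reverse

/-- The letter `ε(w)` (as a word of length at most one), dual to `σ(w)`. -/
def wordEps {X : Type*} [DecidableEq X] (w : List X) : List X :=
  (wordSigma w.reverse).reverse

/-- The initial part `i₂(w)`: retain only the first occurrence from the left of
each letter of `w`. -/
def initPart {X : Type*} [DecidableEq X] (w : List X) : List X :=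
  w.reverse.dedup.reverse

/-- The dual `F̄` of a word function `F`: `F̄(w) = reverse (F (reverse w))`. -/
def dualW {X : Type*} (F : List X → List X) (w : List X) : List X :=
  (F w.reverse).reverse

theorem wordS_length_lt {X : Type*} [DecidableEq X] {w : List X} (hw : w ≠ []) :
    (wordS w).length < w.length := by
  have hpos : 0 < w.length := List.length_pos_iff.mpr hw
  have hk : (w.toFinset.sup fun x => w.idxOf x) < w.length := by
    rw [Finset.sup_lt_iff hpos]
    intro x hx
    exact List.idxOf_lt_length_iff.mpr (List.mem_toFinset.mp hx)
  simp only [wordS, List.length_take]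
  omega

/-- The common recursion defining the word functions `h_m` and `i_m` of Gerhard
and Petrich: `t_m(w) = t_m(s(w)) · σ(w) · t̄_{m-1}(w)` for `m ≥ 3`, where the base
function (`h₂` = first letter, `i₂` = initial part) is a parameter, and all
functions send the empty word to the empty word. -/
def tW {X : Type*} [DecidableEq X] (base : List X → List X) : ℕ → List X → List X
  | m, w =>
    if hw : w = [] then []
    else if hm : m ≤ 2 then base w
    else tW base m (wordS w) ++ wordSigma w ++ (tW base (m - 1) w.reverse).reverse
termination_by m w => m + w.length
decreasing_by
  · have := wordS_length_lt hw; omega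
  · simp only [List.unattach_reverse, List.unattach_attach, List.length_reverse]; omega

/-- The word function `h_m` (`m ≥ 2`): `h₂(w)` is the first letter of `w`, and
`h_m(w) = h_m(s(w)) · σ(w) · h̄_{m-1}(w)` for `m ≥ 3`. -/
def hW {X : Type*} [DecidableEq X] : ℕ → List X → List X :=
  tW fun w => w.take 1

/-- The word function `i_m` (`m ≥ 2`): `i₂(w)` is the initial part of `w`, and
`i_m(w) = i_m(s(w)) · σ(w) · ī_{m-1}(w)` for `m ≥ 3`. -/
def iW {X : Type*} [DecidableEq X] : ℕ → List X → List X :=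
  tW initPart

/-! ### Operations induced by words -/

/-- Evaluation of a word `w` over the alphabet `X` in a semigroup `S` under the
assignment `a : X → S`, computed in the monoid `WithOne S` (so that the empty word
evaluates to `1` and a nonempty word to the coercion of its value in `S`). -/
def evalW {X S : Type*} [Semigroup S] (a : X → S) (w : List X) : WithOne S :=
  (w.map fun t => (a t : WithOne S)).prod

/-- The identification minor `f_{i j}` of an `n`-ary operation: the `i`-th argument
is replaced by the `j`-th. -/
def minor {α β : Type*} {n : ℕ} (f : (Fin n → α) → β) (i j : Fin n) :
    (Fin n → α) → β :=
  fun a => f (Function.update a i (a j))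

/-- `f` depends on its `i`-th variable. -/
def DependsOnVar {α β : Type*} {n : ℕ} (f : (Fin n → α) → β) (i : Fin n) : Prop :=
  ∃ a b : Fin n → α, (∀ k : Fin n, k ≠ i → a k = b k) ∧ f a ≠ f b

/-- `f : Sⁿ → S` is induced by a (nonempty) word over `X_n = {x_1, …, x_n}`. -/
def InducedByWord {S : Type*} [Semigroup S] {n : ℕ} (f : (Fin n → S) → S) : Prop :=
  ∃ w : List (Fin n), w ≠ [] ∧ ∀ a : Fin n → S, (f a : WithOne S) = evalW a w


section AuxLemmas

variable {X : Type*} [DecidableEq X]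

lemma wordS_append (A B : List X) (l : X) (hlA : l ∉ A.toFinset)
    (hB : B.toFinset ⊆ insert l A.toFinset) :
    wordS (A ++ l :: B) = A ∧ wordSigma (A ++ l :: B) = [l] := by
  have hlA' : l ∉ A := fun h => hlA (List.mem_toFinset.mpr h)
  have hidxl : (A ++ l :: B).idxOf l = A.length := by
    rw [List.idxOf_append_of_notMem hlA', List.idxOf_cons_self]; omega
  have hsup : ((A ++ l :: B).toFinset.sup fun x => (A ++ l :: B).idxOf x) = A.length := by
    apply le_antisymm
    · apply Finset.sup_le
      intro x hx
      rw [List.mem_toFinset, List.mem_append, List.mem_cons] at hx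
      have hx' : x ∈ A ∨ x = l := by
        rcases hx with h | h | h
        · exact Or.inl h
        · exact Or.inr h
        · rcases Finset.mem_insert.mp (hB (List.mem_toFinset.mpr h)) with h' | h'
          · exact Or.inr h'
          · exact Or.inl (List.mem_toFinset.mp h')
      rcases hx' with h | h
      · rw [List.idxOf_append_of_mem h]
        exact le_of_lt (List.idxOf_lt_length_iff.mpr h)
      · subst h; rw [hidxl]
    · have : l ∈ (A ++ l :: B).toFinset := by simp
      calc A.length = (A ++ l :: B).idxOf l := hidxl.symm
        _ ≤ _ := Finset.le_sup (f := fun x => (A ++ l :: B).idxOf x) this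
  constructor
  · rw [wordS, hsup, List.take_left]
  · rw [wordSigma, hsup, List.drop_left]
    rfl

lemma wordS_decomp {w : List X} (hw : w ≠ []) :
    ∃ l B, wordSigma w = [l] ∧ l ∉ (wordS w).toFinset ∧
      w = wordS w ++ l :: B ∧
      B.toFinset ⊆ insert l (wordS w).toFinset ∧
      w.toFinset = insert l (wordS w).toFinset := by
  set k := w.toFinset.sup fun x => w.idxOf x with hkdef
  have hpos : 0 < w.length := List.length_pos_iff.mpr hw
  have hk : k < w.length := by
    rw [hkdef, Finset.sup_lt_iff hpos]
    intro x hx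
    exact List.idxOf_lt_length_iff.mpr (List.mem_toFinset.mp hx)
  obtain ⟨x0, hx0mem, hx0⟩ := Finset.exists_mem_eq_sup w.toFinset
    ((List.toFinset_nonempty_iff w).mpr hw) fun x => w.idxOf x
  have hidx0 : w.idxOf x0 = k := hx0.symm
  have hgetk : w[k]'hk = x0 := by
    have h := List.getElem_idxOf (x := x0) (xs := w) (by omega)
    simp only [hidx0] at h
    exact h
  have hdropk : w.drop k = x0 :: w.drop (k + 1) := by
    rw [List.drop_eq_getElem_cons hk, hgetk]
  have hsig : wordSigma w = [x0] := by
    rw [wordSigma, ← hkdef, hdropk]; rfl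
  have hdecomp : w = wordS w ++ x0 :: w.drop (k + 1) := by
    rw [wordS, ← hkdef, ← hdropk, List.take_append_drop]
  have hlentake : (w.take k).length = k := List.length_take_of_le (le_of_lt hk)
  have hnot : x0 ∉ (wordS w).toFinset := by
    rw [wordS, ← hkdef, List.mem_toFinset]
    intro hmem
    have h1 : w.idxOf x0 = (w.take k).idxOf x0 := by
      conv_lhs => rw [← List.take_append_drop k w]
      exact List.idxOf_append_of_mem hmem
    have h2 : (w.take k).idxOf x0 < k := by
      have := List.idxOf_lt_length_iff.mpr hmem
      omega
    omega
  have hmemtake : ∀ x ∈ w, x ∈ wordS w ∨ x = x0 := by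
    intro x hx
    have hle : w.idxOf x ≤ k := Finset.le_sup (f := fun x => w.idxOf x)
      (List.mem_toFinset.mpr hx)
    have htk : x ∈ w.take (k + 1) := by
      by_contra hmem
      have h1 : w.idxOf x = (w.take (k+1)).length + (w.drop (k+1)).idxOf x := by
        conv_lhs => rw [← List.take_append_drop (k+1) w]
        exact List.idxOf_append_of_notMem hmem
      have h2 : (w.take (k+1)).length = k + 1 := List.length_take_of_le hk
      omega
    rw [List.take_add, hdropk] at htk
    rcases List.mem_append.mp htk with h | h
    · exact Or.inl (by rwa [wordS, ← hkdef])
    · right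
      simpa using h
  refine ⟨x0, w.drop (k+1), hsig, hnot, hdecomp, ?_, ?_⟩
  · intro x hx
    rw [List.mem_toFinset] at hx
    have hxw : x ∈ w := by
      rw [hdecomp]
      exact List.mem_append.mpr (Or.inr (List.mem_cons_of_mem _ hx))
    rcases hmemtake x hxw with h | h
    · exact Finset.mem_insert_of_mem (List.mem_toFinset.mpr h)
    · exact h ▸ Finset.mem_insert_self _ _
  · apply le_antisymm
    · intro x hx
      rcases hmemtake x (List.mem_toFinset.mp hx) with h | h
      · exact Finset.mem_insert_of_mem (List.mem_toFinset.mpr h)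
      · exact h ▸ Finset.mem_insert_self _ _
    · intro x hx
      rw [List.mem_toFinset]
      rcases Finset.mem_insert.mp hx with h | h
      · rw [h, hdecomp]; exact List.mem_append.mpr (Or.inr (List.mem_cons_self))
      · rw [hdecomp]
        exact List.mem_append.mpr (Or.inl (List.mem_toFinset.mp h))

lemma tW_nil (base : List X → List X) (m : ℕ) : tW base m [] = [] := by
  rw [tW]; simp

lemma wordS_nil : wordS ([] : List X) = [] := rfl

lemma tW_toFinset_subset_aux (base : List X → List X)
    (hbase : ∀ v : List X, (base v).toFinset ⊆ v.toFinset) :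
    ∀ N m (w : List X), m + w.length ≤ N → (tW base m w).toFinset ⊆ w.toFinset := by
  intro N
  induction N with
  | zero =>
    intro m w h
    have hm : m = 0 := by omega
    have hw : w = [] := by cases w <;> simp_all
    subst hm; subst hw
    rw [tW_nil]
  | succ N ih =>
    intro m w h
    rw [tW]
    split_ifs with hw hm
    · simp
    · exact hbase w
    · simp only [List.toFinset_append, List.toFinset_reverse]
      apply Finset.union_subset
      apply Finset.union_subset
      · refine (ih m (wordS w) ?_).trans ?_
        · have := wordS_length_lt hw; omega
        · intro x hx
          rw [List.mem_toFinset] at *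
          exact List.mem_of_mem_take hx
      · intro x hx
        rw [List.mem_toFinset] at *
        exact List.mem_of_mem_drop (List.mem_of_mem_take hx)
      · refine (ih (m-1) w.reverse ?_).trans ?_
        · simp only [List.length_reverse]; omega
        · simp

lemma tW_toFinset_subset (base : List X → List X)
    (hbase : ∀ v : List X, (base v).toFinset ⊆ v.toFinset) (m : ℕ) (w : List X) :
    (tW base m w).toFinset ⊆ w.toFinset :=
  tW_toFinset_subset_aux base hbase (m + w.length) m w le_rfl

lemma toFinset_subset_tW_aux (base : List X → List X) {m : ℕ} (hm : 3 ≤ m) :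
    ∀ N (w : List X), w.length ≤ N → w.toFinset ⊆ (tW base m w).toFinset := by
  intro N
  induction N with
  | zero =>
    intro w h
    have hw : w = [] := by cases w <;> simp_all
    subst hw; simp
  | succ N ih =>
    intro w h
    by_cases hw : w = []
    · subst hw; simp
    · obtain ⟨l, B, hsig, hlnot, hdecomp, hB, hcontent⟩ := wordS_decomp hw
      rw [tW, dif_neg hw, dif_neg (by omega : ¬ m ≤ 2)]
      rw [hcontent]
      intro x hx
      simp only [List.toFinset_append, Finset.mem_union]
      rcases Finset.mem_insert.mp hx with h | h
      · left; right
        rw [hsig, h]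
        simp
      · left; left
        have hlen : (wordS w).length ≤ N := by
          have := wordS_length_lt hw; omega
        exact ih (wordS w) hlen h

lemma tW_toFinset_eq (base : List X → List X)
    (hbase : ∀ v : List X, (base v).toFinset ⊆ v.toFinset) {m : ℕ} (hm : 3 ≤ m)
    (w : List X) : (tW base m w).toFinset = w.toFinset :=
  le_antisymm (tW_toFinset_subset base hbase m w)
    (toFinset_subset_tW_aux base hm w.length w le_rfl)

lemma wordS_tW (base : List X → List X)
    (hbase : ∀ v : List X, (base v).toFinset ⊆ v.toFinset) {m : ℕ} (hm : 3 ≤ m)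
    (w : List X) : wordS (tW base m w) = tW base m (wordS w) := by
  by_cases hw : w = []
  · subst hw
    simp only [wordS_nil, tW_nil]
  · obtain ⟨l, B, hsig, hlnot, hdecomp, hB, hcontent⟩ := wordS_decomp hw
    have hA : (tW base m (wordS w)).toFinset = (wordS w).toFinset :=
      tW_toFinset_eq base hbase hm (wordS w)
    have key := wordS_append (tW base m (wordS w)) (tW base (m-1) w.reverse).reverse l
      (by rw [hA]; exact hlnot) ?_
    · conv_lhs => rw [tW, dif_neg hw, dif_neg (by omega : ¬ m ≤ 2), hsig]
      rw [show tW base m (wordS w) ++ [l] ++ (tW base (m-1) w.reverse).reverse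
          = tW base m (wordS w) ++ l :: (tW base (m-1) w.reverse).reverse by simp]
      exact key.1
    · intro x hx
      rw [hA, ← hcontent]
      simp only [List.toFinset_reverse] at hx
      have := tW_toFinset_subset base hbase (m-1) w.reverse hx
      simpa using this

lemma toFinset_initPart (w : List X) : (initPart w).toFinset = w.toFinset := by
  ext x; simp [initPart, List.mem_dedup]

lemma initPart_nil : initPart ([] : List X) = [] := rfl

lemma union_eq_of_mem {xs acc : List X} (h : ∀ x ∈ xs, x ∈ acc) : xs ∪ acc = acc := by
  induction xs with
  | nil => simp
  | cons a t iht =>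
    rw [List.cons_union, iht (fun x hx => h x (List.mem_cons_of_mem _ hx))]
    exact List.insert_of_mem (h a (List.mem_cons_self))

lemma initPart_append_of_subset {u v : List X} (h : ∀ x ∈ v, x ∈ u) :
    initPart (u ++ v) = initPart u := by
  unfold initPart
  rw [List.reverse_append, List.dedup_append, union_eq_of_mem]
  intro x hx
  rw [List.mem_dedup, List.mem_reverse]
  exact h x (List.mem_reverse.mp hx)

lemma initPart_append_singleton {u : List X} {l : X} (h : l ∉ u) :
    initPart (u ++ [l]) = initPart u ++ [l] := by
  unfold initPart
  rw [List.reverse_append]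
  simp only [List.reverse_cons, List.reverse_nil, List.nil_append, List.singleton_append]
  rw [List.dedup_cons_of_notMem (by simpa using h), List.reverse_cons]

lemma wordS_initPart (w : List X) : wordS (initPart w) = initPart (wordS w) := by
  by_cases hw : w = []
  · subst hw; rfl
  · obtain ⟨l, B, hsig, hlnot, hdecomp, hB, hcontent⟩ := wordS_decomp hw
    have h1 : initPart w = initPart (wordS w) ++ [l] := by
      conv_lhs => rw [hdecomp]
      rw [show wordS w ++ l :: B = (wordS w ++ [l]) ++ B by simp]
      rw [initPart_append_of_subset ?_, initPart_append_singleton ?_]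
      · exact fun h => hlnot (List.mem_toFinset.mpr h)
      · intro x hx
        have := hB (List.mem_toFinset.mpr hx)
        rcases Finset.mem_insert.mp this with h | h
        · simp [h]
        · simp [List.mem_toFinset.mp h]
    rw [h1]
    have := wordS_append (initPart (wordS w)) [] l
      (by rw [toFinset_initPart]; exact hlnot) (by simp)
    simpa using this.1

lemma wordSigma_nil : wordSigma ([] : List X) = [] := rfl

lemma toFinset_map' {Y : Type*} [DecidableEq Y] (f : X → Y) (u : List X) :
    (u.map f).toFinset = u.toFinset.image f := by
  ext x; simp

lemma wordS_subst {u : List X} {l p q : X} (hsig : wordSigma u = [l])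
    (hp : l ≠ p) (hq : l ≠ q) :
    wordS (subst u p q) = subst (wordS u) p q := by
  have hu : u ≠ [] := by
    intro h; subst h; rw [wordSigma_nil] at hsig; exact nomatch hsig
  obtain ⟨l', B, hsig', hlnot, hdecomp, hB, _⟩ := wordS_decomp hu
  have hl' : l' = l := by
    rw [hsig'] at hsig
    exact (List.cons.injEq _ _ _ _ ▸ hsig).1
  subst hl'
  have hd2 : subst u p q = subst (wordS u) p q ++ l' :: subst B p q := by
    conv_lhs => rw [hdecomp]
    simp only [subst, List.map_append, List.map_cons, if_neg hp]
  rw [hd2]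
  refine (wordS_append _ _ l' ?_ ?_).1
  · simp only [subst, toFinset_map', Finset.mem_image, not_exists]
    rintro x ⟨hx, hfx⟩
    by_cases hxp : x = p
    · rw [if_pos hxp] at hfx; exact hq hfx.symm
    · rw [if_neg hxp] at hfx; exact hlnot (hfx ▸ hx)
  · intro x hx
    simp only [subst, toFinset_map', Finset.mem_image] at hx
    obtain ⟨y, hy, hfy⟩ := hx
    rcases Finset.mem_insert.mp (hB hy) with h | h
    · subst h
      rw [if_neg hp] at hfy
      exact hfy ▸ Finset.mem_insert_self _ _
    · apply Finset.mem_insert_of_mem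
      simp only [subst, toFinset_map', Finset.mem_image]
      exact ⟨y, h, hfy⟩

lemma tW_le_two {base : List X → List X} {m : ℕ} (hm : m ≤ 2) (hb : base [] = [])
    (v : List X) : tW base m v = base v := by
  rw [tW]
  split_ifs with h
  · rw [h, hb]
  · rfl

end AuxLemmas

/-- Let `t` be one of the word functions `i_m` (`m ≥ 2`) or `h_m`
(`m ≥ 3`). If `{w_{ij}}` (`n ≥ 5`) is an essential scheme satisfying the
`t`-consistency conditions, and `l` is such that `σ(w_{ij}) = x_l` whenever
`l ∉ {i,j}`, then `{s(w_{ij}) : i < j, l ∉ {i,j}}` is an `(n−1)`-scheme over the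
variables `X_n \ {x_l}`: its members have content `X_n \ {x_i, x_l}` and they
satisfy the `t`-consistency conditions (C1) and (C2). -/
theorem s_scheme_of_scheme (n : ℕ) (hn : 5 ≤ n)
    (t : List (Fin n) → List (Fin n))
    (ht : (∃ m : ℕ, 2 ≤ m ∧ t = iW m) ∨ (∃ m : ℕ, 3 ≤ m ∧ t = hW m))
    (w : Fin n → Fin n → List (Fin n))
    (hc : ∀ i j : Fin n, i < j → (w i j).toFinset = Finset.univ \ {i})
    (hC1 : ∀ i j p q : Fin n, i < j → p < q → i ≠ p → i ≠ q → j ≠ p → j ≠ q →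
      t (subst (w i j) p q) = t (subst (w p q) i j))
    (hC2 : ∀ i j k : Fin n, i < j → j < k →
      t (subst (w i j) j k) = t (subst (w j k) i k) ∧
      t (subst (w j k) i k) = t (subst (w i k) j k))
    (l : Fin n)
    (hl : ∀ i j : Fin n, i < j → l ≠ i → l ≠ j → wordSigma (w i j) = [l]) :
    (∀ i j : Fin n, i < j → l ≠ i → l ≠ j →
      (wordS (w i j)).toFinset = Finset.univ \ {i, l}) ∧
    (∀ i j p q : Fin n, i < j → p < q → i ≠ p → i ≠ q → j ≠ p → j ≠ q →
      l ≠ i → l ≠ j → l ≠ p → l ≠ q →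
      t (subst (wordS (w i j)) p q) = t (subst (wordS (w p q)) i j)) ∧
    (∀ i j k : Fin n, i < j → j < k → l ≠ i → l ≠ j → l ≠ k →
      t (subst (wordS (w i j)) j k) = t (subst (wordS (w j k)) i k) ∧
      t (subst (wordS (w j k)) i k) = t (subst (wordS (w i k)) j k)) := by
  have hts : ∀ u : List (Fin n), wordS (t u) = t (wordS u) := by
    rcases ht with ⟨m, hm, rfl⟩ | ⟨m, hm, rfl⟩
    · intro u
      by_cases hm3 : 3 ≤ m
      · exact wordS_tW initPart (fun v => (toFinset_initPart v).le) hm3 u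
      · have hm2 : m ≤ 2 := by omega
        show wordS (tW initPart m u) = tW initPart m (wordS u)
        rw [tW_le_two hm2 initPart_nil, tW_le_two hm2 initPart_nil]
        exact wordS_initPart u
    · intro u
      exact wordS_tW (fun w => w.take 1)
        (fun v => fun x hx => List.mem_toFinset.mpr
          (List.mem_of_mem_take (List.mem_toFinset.mp hx))) hm u
  have key : ∀ u v : List (Fin n), t u = t v → t (wordS u) = t (wordS v) := by
    intro u v h
    rw [← hts, ← hts, h]
  refine ⟨?_, ?_, ?_⟩
  · intro i j hij hli hlj
    have hsig := hl i j hij hli hlj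
    have hu : w i j ≠ [] := by
      intro h; rw [h, wordSigma_nil] at hsig; exact nomatch hsig
    obtain ⟨l', B, hsig', hlnot, _, _, hcontent⟩ := wordS_decomp hu
    have hl' : l' = l := by
      rw [hsig'] at hsig
      exact (List.cons.injEq _ _ _ _ ▸ hsig).1
    rw [hl'] at hlnot hcontent
    have heq : insert l (wordS (w i j)).toFinset = Finset.univ \ {i} := by
      rw [← hcontent]; exact hc i j hij
    ext x
    simp only [Finset.mem_sdiff, Finset.mem_univ, true_and, Finset.mem_insert,
      Finset.mem_singleton, not_or]
    constructor
    · intro hx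
      have hx' : x ∈ insert l (wordS (w i j)).toFinset := Finset.mem_insert_of_mem hx
      rw [heq] at hx'
      refine ⟨by simpa using hx', ?_⟩
      rintro rfl; exact hlnot hx
    · rintro ⟨hxi, hxl⟩
      have hx' : x ∈ insert l (wordS (w i j)).toFinset := by rw [heq]; simp [hxi]
      rcases Finset.mem_insert.mp hx' with h | h
      · exact absurd h hxl
      · exact h
  · intro i j p q hij hpq hip hiq hjp hjq hli hlj hlp hlq
    have e1 := wordS_subst (hl i j hij hli hlj) hlp hlq
    have e2 := wordS_subst (hl p q hpq hlp hlq) hli hlj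
    rw [← e1, ← e2, ← hts, ← hts, hC1 i j p q hij hpq hip hiq hjp hjq]
  · intro i j k hij hjk hli hlj hlk
    obtain ⟨h1, h2⟩ := hC2 i j k hij hjk
    have e1 := wordS_subst (hl i j hij hli hlj) hlj hlk
    have e2 := wordS_subst (hl j k hjk hlj hlk) hli hlk
    have e3 := wordS_subst (hl i k (hij.trans hjk) hli hlk) hlj hlk
    constructor
    · rw [← e1, ← e2, ← hts, ← hts, h1]
    · rw [← e2, ← e3, ← hts, ← hts, h2]
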